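/- Let θ be an inner function on the unit disc D, α a unimodular complex number, and σ_α its Clark measure, i.e., the positive Borel measure on the unit circle T whose Poisson integral equals (1 − |θ(z)|²)/|α − θ(z)|² on D. Then σ_α is singular with respect to normalized Lebesgue measure on T. -/

import Mathlib

set_option maxHeartbeats 2000000
open Complex Metric MeasureTheory Filter Set
open scoped ENNReal Topology

lemma clark_meanValue (h : ℂ → ℂ) (hh : DifferentiableOn ℂ h (ball (0:ℂ) 1))
    {ρ : ℝ} (h0 : 0 < ρ) (h1 : ρ < 1) :
    ∫ t in Ioc (0:ℝ) (2*Real.pi), h ((ρ:ℂ) * Complex.exp (t * I)) = (2*Real.pi : ℝ) • h 0 := by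
  have hd : DiffContOnCl ℂ h (ball (0:ℂ) ρ) := by
    refine ⟨hh.mono (ball_subset_ball h1.le), ?_⟩
    refine (hh.continuousOn).mono ?_
    refine (closure_ball_subset_closedBall).trans ?_
    intro z hz
    simp only [mem_closedBall, mem_ball, dist_zero_right] at hz ⊢
    exact lt_of_le_of_lt hz h1
  have key := hd.circleIntegral_sub_inv_smul (w := 0) (by simpa using h0)
  have heq : (∮ z in C(0, ρ), (z - 0)⁻¹ • h z)
      = ∫ t in (0:ℝ)..(2*Real.pi), I • h ((ρ:ℂ) * Complex.exp (t * I)) := by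
    rw [circleIntegral]
    congr 1
    ext t
    rw [deriv_circleMap]
    have hc : circleMap 0 ρ t = (ρ:ℂ) * Complex.exp (t * I) := by simp [circleMap]
    have hρ : (ρ:ℂ) ≠ 0 := by exact_mod_cast h0.ne'
    have he : Complex.exp (t * I) ≠ 0 := Complex.exp_ne_zero _
    rw [sub_zero, smul_eq_mul, smul_eq_mul, smul_eq_mul, hc]
    field_simp
  rw [heq, intervalIntegral.integral_smul, smul_eq_mul] at key
  have h2 : ∫ t in (0:ℝ)..(2*Real.pi), h ((ρ:ℂ) * Complex.exp (t * I)) = (2*Real.pi:ℝ) • h 0 := by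
    have hI : (I:ℂ) ≠ 0 := I_ne_zero
    rw [smul_eq_mul] at key
    have := mul_left_cancel₀ hI
      (show I * (∫ t in (0:ℝ)..(2*Real.pi), h ((ρ:ℂ) * Complex.exp (t * I)))
          = I * ((2*Real.pi:ℝ) • h 0) from key.trans (by rw [Complex.real_smul]; push_cast; ring))
    exact this
  rw [← h2, intervalIntegral.integral_of_le Real.two_pi_pos.le]

theorem stmt2 (θ : ℂ → ℂ)
    (hθ : DifferentiableOn ℂ θ (ball (0 : ℂ) 1))
    (hθmap : ∀ z ∈ ball (0 : ℂ) 1, θ z ∈ ball (0 : ℂ) 1)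
    (m : Measure ℂ)
    (hm : m = (ENNReal.ofReal (2 * Real.pi))⁻¹ •
      Measure.map (fun t : ℝ => Complex.exp (t * Complex.I))
        (volume.restrict (Ioc (0 : ℝ) (2 * Real.pi))))
    (θb : ℂ → ℂ)
    (hinner : ∀ᵐ ζ ∂m,
      Tendsto (fun r : ℝ => θ (r * ζ)) (nhdsWithin 1 (Iio 1)) (nhds (θb ζ)) ∧ ‖θb ζ‖ = 1)
    (α : ℂ) (hα : ‖α‖ = 1)
    (σ : Measure ℂ) (hσfin : IsFiniteMeasure σ)
    (hσsupp : σ (sphere (0 : ℂ) 1)ᶜ = 0)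
    (hσ : ∀ z ∈ ball (0 : ℂ) 1,
      ∫ ζ, (1 - ‖z‖ ^ 2) / ‖ζ - z‖ ^ 2 ∂σ = (1 - ‖θ z‖ ^ 2) / ‖α - θ z‖ ^ 2) :
    σ ⟂ₘ m := by
  have twopi_pos : (0:ℝ) < 2*Real.pi := Real.two_pi_pos
  set c : ℝ≥0∞ := (ENNReal.ofReal (2 * Real.pi))⁻¹ with hc
  have hc0 : c ≠ 0 := by
    rw [hc, ne_eq, ENNReal.inv_eq_zero]
    exact ENNReal.ofReal_ne_top
  have hctop : c ≠ ⊤ := by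
    rw [hc]
    simp [ENNReal.inv_ne_top, ENNReal.ofReal_pos, twopi_pos, Real.pi_pos]
  set φ : ℝ → ℂ := fun t => Complex.exp (t * Complex.I) with hφ
  have hφc : Continuous φ := Complex.continuous_exp.comp (by continuity)
  have hφm : Measurable φ := hφc.measurable
  set μ : Measure ℝ := volume.restrict (Ioc (0:ℝ) (2*Real.pi)) with hμ
  have hμuniv : μ univ = ENNReal.ofReal (2*Real.pi) := by
    rw [hμ, Measure.restrict_apply MeasurableSet.univ, univ_inter, Real.volume_Ioc, sub_zero]
  have hmap : ∀ A : Set ℂ, MeasurableSet A → m A = c * μ (φ ⁻¹' A) := by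
    intro A hA
    rw [hm, Measure.smul_apply, Measure.map_apply hφm hA, smul_eq_mul]
  have hφ_sphere : ∀ t : ℝ, φ t ∈ sphere (0:ℂ) 1 := by
    intro t
    simp only [mem_sphere_iff_norm, sub_zero, hφ]
    simpa using Complex.abs_exp_ofReal_mul_I t
  have hm_sphere : m (sphere (0:ℂ) 1)ᶜ = 0 := by
    rw [hmap _ (isClosed_sphere.measurableSet).compl]
    have : φ ⁻¹' (sphere (0:ℂ) 1)ᶜ = ∅ := by
      ext t
      simp only [mem_preimage, mem_compl_iff, mem_empty_iff_false, iff_false, not_not]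
      exact hφ_sphere t
    rw [this]
    simp
  have haes : ∀ᵐ ζ ∂m, ζ ∈ sphere (0:ℂ) 1 := by
    rw [ae_iff]
    exact hm_sphere
  have htrans : ∀ {p : ℂ → Prop}, (∀ᵐ ζ ∂m, p ζ) → (∀ᵐ t ∂μ, p (φ t)) := by
    intro p hp
    rw [hm, MeasureTheory.Measure.ae_ennreal_smul_measure_iff hc0] at hp
    exact (MeasureTheory.Measure.tendsto_ae_map hφm.aemeasurable).eventually hp
  haveI hmfin : IsFiniteMeasure m := by
    constructor
    rw [hmap univ MeasurableSet.univ]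
    apply ENNReal.mul_lt_top hctop.lt_top
    exact lt_of_le_of_lt (measure_mono (subset_univ _)) (by rw [hμuniv]; exact ENNReal.ofReal_lt_top)

  -- sequence tending to 1 from below
  set ρseq : ℕ → ℝ := fun n => 1 - 1/(n+2) with hρseq
  have hρpos : ∀ n, 0 < ρseq n := by
    intro n
    have h1 : 1/((n:ℝ)+2) ≤ 1/2 := by
      apply div_le_div_of_nonneg_left (by norm_num) (by norm_num)
      exact_mod_cast by linarith [Nat.cast_nonneg (α := ℝ) n]
    simp only [hρseq]
    linarith
  have hρlt : ∀ n, ρseq n < 1 := by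
    intro n
    have : 0 < 1/((n:ℝ)+2) := by positivity
    simp only [hρseq]
    linarith
  have hρtend : Tendsto ρseq atTop (𝓝[<] (1:ℝ)) := by
    rw [tendsto_nhdsWithin_iff]
    constructor
    · have h2 : Tendsto (fun n : ℕ => ((n:ℝ)+2)) atTop atTop :=
        tendsto_atTop_add_const_right atTop 2 tendsto_natCast_atTop_atTop
      have h3 : Tendsto (fun n : ℕ => 1/((n:ℝ)+2)) atTop (𝓝 0) := by
        simp only [one_div]; exact h2.inv_tendsto_atTop
      have := h3.const_sub 1
      simpa [hρseq] using this
    · exact Eventually.of_forall fun n => hρlt n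
  have hθc : ContinuousOn θ (ball (0:ℂ) 1) := hθ.continuousOn
  -- measurability of θb with respect to m
  have hFn_meas : ∀ n : ℕ, AEStronglyMeasurable (fun ζ : ℂ => θ (((ρseq n : ℝ):ℂ) * ζ)) m := by
    intro n
    have hcont : ContinuousOn (fun ζ : ℂ => θ (((ρseq n : ℝ):ℂ) * ζ)) (closedBall (0:ℂ) 1) := by
      apply hθc.comp ((continuous_const.mul continuous_id).continuousOn)
      intro ζ hζ
      simp only [mem_closedBall, dist_zero_right] at hζ
      simp only [mem_ball, dist_zero_right, Pi.mul_apply, id_eq, norm_mul, Complex.norm_real]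
      calc |ρseq n| * ‖ζ‖ ≤ |ρseq n| * 1 := by
            exact mul_le_mul_of_nonneg_left hζ (abs_nonneg _)
        _ < 1 := by rw [mul_one, abs_of_pos (hρpos n)]; exact hρlt n
    have := hcont.aestronglyMeasurable measurableSet_closedBall (μ := m)
    rwa [Measure.restrict_eq_self_of_ae_mem (haes.mono fun ζ hζ => sphere_subset_closedBall hζ)] at this
  have hconv : ∀ᵐ ζ ∂m, Tendsto (fun n => θ (((ρseq n : ℝ):ℂ) * ζ)) atTop (𝓝 (θb ζ)) := by
    filter_upwards [hinner] with ζ hζ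
    exact hζ.1.comp hρtend
  have hθbm : AEStronglyMeasurable θb m :=
    aestronglyMeasurable_of_tendsto_ae atTop hFn_meas hconv
  -- a.e. statements transported to the parameter space
  have hμt : ∀ᵐ t ∂μ, Tendsto (fun r : ℝ => θ ((r:ℂ) * φ t)) (𝓝[<] 1) (𝓝 (θb (φ t)))
      ∧ ‖θb (φ t)‖ = 1 := htrans hinner
  have hψ : AEStronglyMeasurable (fun t => θb (φ t)) μ := by
    obtain ⟨g, hg, hae⟩ := hθbm
    have hae' : θb =ᵐ[Measure.map φ μ] g := by
      rwa [hm, Measure.ae_ennreal_smul_measure_eq hc0] at hae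
    exact (AEStronglyMeasurable.comp_aemeasurable ⟨g, hg, hae'⟩ hφm.aemeasurable : _)
  -- norm facts about the denominators
  have hαconj : (starRingEnd ℂ) α * α = 1 := by
    have := Complex.mul_conj α
    rw [Complex.normSq_eq_norm_sq] at this
    rw [mul_comm, this]
    simp only [hα]
    norm_num
  have hden : ∀ s : ℝ, 0 < s → s < 1 → ∀ w : ℂ, ‖w‖ ≤ 1 →
      (1-s : ℝ) ≤ ‖1 - (s:ℂ) * (starRingEnd ℂ) α * w‖ ∧ 1 - (s:ℂ) * (starRingEnd ℂ) α * w ≠ 0 := by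
    intro s hs0 hs1 w hw
    have hnv : ‖(s:ℂ) * (starRingEnd ℂ) α * w‖ ≤ s := by
      rw [norm_mul, norm_mul, Complex.norm_real, RCLike.norm_conj, hα, Real.norm_eq_abs,
        abs_of_pos hs0, mul_one]
      nlinarith
    have h1 : (1-s:ℝ) ≤ ‖1 - (s:ℂ) * (starRingEnd ℂ) α * w‖ := by
      have := norm_sub_norm_le (1:ℂ) ((s:ℂ) * (starRingEnd ℂ) α * w)
      rw [norm_one] at this
      linarith
    exact ⟨h1, by
      intro hzero
      rw [hzero, norm_zero] at h1
      linarith⟩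
  have hθ0 : θ 0 ∈ ball (0:ℂ) 1 := hθmap 0 (by simp)
  -- the key integral identity coming from the mean value property
  have hkey : ∀ s : ℝ, 0 < s → s < 1 →
      ∫ t, ((1-s : ℝ):ℂ) * (1 - (s:ℂ) * (starRingEnd ℂ) α * θb (φ t))⁻¹ ∂μ
        = (2*Real.pi : ℝ) • (((1-s : ℝ):ℂ) * (1 - (s:ℂ) * (starRingEnd ℂ) α * θ 0)⁻¹) := by
    intro s hs0 hs1
    set g : ℂ → ℂ := fun z => ((1-s : ℝ):ℂ) * (1 - (s:ℂ) * (starRingEnd ℂ) α * θ z)⁻¹ with hg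
    have hgdiff : DifferentiableOn ℂ g (ball (0:ℂ) 1) := by
      apply (differentiableOn_const _).mul
      apply DifferentiableOn.inv
      · exact (differentiableOn_const _).sub ((differentiableOn_const _).mul hθ)
      · intro z hz
        exact (hden s hs0 hs1 (θ z) (le_of_lt (by simpa [mem_ball, dist_zero_right] using hθmap z hz))).2
    have hmv : ∀ n : ℕ, ∫ t, g (((ρseq n : ℝ):ℂ) * φ t) ∂μ = (2*Real.pi : ℝ) • g 0 := by
      intro n
      have := clark_meanValue g hgdiff (hρpos n) (hρlt n)
      simpa [hμ, hφ] using this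
    have hdct := MeasureTheory.tendsto_integral_of_dominated_convergence
      (μ := μ) (F := fun n t => g (((ρseq n : ℝ):ℂ) * φ t))
      (f := fun t => ((1-s : ℝ):ℂ) * (1 - (s:ℂ) * (starRingEnd ℂ) α * θb (φ t))⁻¹)
      (bound := fun _ => 1)
      (fun n => by
        apply Continuous.aestronglyMeasurable
        have hc1 : Continuous (fun t : ℝ => θ (((ρseq n : ℝ):ℂ) * φ t)) := by
          apply hθc.comp_continuous (continuous_const.mul hφc)
          intro t
          simp only [mem_ball, dist_zero_right, Pi.mul_apply, norm_mul, Complex.norm_real]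
          have := hφ_sphere t
          simp only [mem_sphere_iff_norm, sub_zero] at this
          rw [this, mul_one, Real.norm_eq_abs, abs_of_pos (hρpos n)]
          exact hρlt n
        have hne : ∀ t : ℝ, 1 - (s:ℂ) * (starRingEnd ℂ) α * θ (((ρseq n : ℝ):ℂ) * φ t) ≠ 0 := by
          intro t
          apply (hden s hs0 hs1 _ _).2
          have : (((ρseq n : ℝ):ℂ) * φ t) ∈ ball (0:ℂ) 1 := by
            simp only [mem_ball, dist_zero_right, norm_mul, Complex.norm_real]
            have := hφ_sphere t
            simp only [mem_sphere_iff_norm, sub_zero] at this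
            rw [this, mul_one, Real.norm_eq_abs, abs_of_pos (hρpos n)]
            exact hρlt n
          exact le_of_lt (by simpa [mem_ball, dist_zero_right] using hθmap _ this)
        exact continuous_const.mul ((continuous_const.sub (continuous_const.mul hc1)).inv₀ hne))
      (by
        apply MeasureTheory.integrable_const)
      (fun n => by
        apply Eventually.of_forall
        intro t
        have hball : (((ρseq n : ℝ):ℂ) * φ t) ∈ ball (0:ℂ) 1 := by
          simp only [mem_ball, dist_zero_right, norm_mul, Complex.norm_real]
          have := hφ_sphere t
          simp only [mem_sphere_iff_norm, sub_zero] at this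
          rw [this, mul_one, Real.norm_eq_abs, abs_of_pos (hρpos n)]
          exact hρlt n
        have hw : ‖θ (((ρseq n : ℝ):ℂ) * φ t)‖ ≤ 1 :=
          le_of_lt (by simpa [mem_ball, dist_zero_right] using hθmap _ hball)
        have hd := (hden s hs0 hs1 _ hw).1
        rw [norm_mul, norm_inv, Complex.norm_real, Real.norm_eq_abs, abs_of_pos (by linarith : (0:ℝ) < 1 - s)]
        show (1-s) * ‖1 - (s:ℂ) * (starRingEnd ℂ) α * θ (((ρseq n:ℝ):ℂ) * φ t)‖⁻¹ ≤ 1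
        calc (1-s) * ‖1 - (s:ℂ) * (starRingEnd ℂ) α * θ (((ρseq n:ℝ):ℂ) * φ t)‖⁻¹
            ≤ (1-s) * (1-s)⁻¹ := by
              apply mul_le_mul_of_nonneg_left _ (by linarith)
              exact inv_anti₀ (by linarith) hd
          _ = 1 := mul_inv_cancel₀ (by linarith)
        )
      (by
        filter_upwards [hμt] with t ht
        have hθn : Tendsto (fun n => θ (((ρseq n : ℝ):ℂ) * φ t)) atTop (𝓝 (θb (φ t))) :=
          ht.1.comp hρtend
        have hlim : Tendsto (fun n => 1 - (s:ℂ) * (starRingEnd ℂ) α * θ (((ρseq n : ℝ):ℂ) * φ t))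
            atTop (𝓝 (1 - (s:ℂ) * (starRingEnd ℂ) α * θb (φ t))) :=
          tendsto_const_nhds.sub (tendsto_const_nhds.mul hθn)
        have hne : 1 - (s:ℂ) * (starRingEnd ℂ) α * θb (φ t) ≠ 0 :=
          (hden s hs0 hs1 _ (le_of_eq ht.2)).2
        exact tendsto_const_nhds.mul (hlim.inv₀ hne))
    have : Tendsto (fun _ : ℕ => (2*Real.pi : ℝ) • g 0) atTop
        (𝓝 (∫ t, ((1-s : ℝ):ℂ) * (1 - (s:ℂ) * (starRingEnd ℂ) α * θb (φ t))⁻¹ ∂μ)) := by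
      apply hdct.congr
      intro n
      exact hmv n
    exact tendsto_nhds_unique this tendsto_const_nhds
  -- second limit: s → 1
  have hL : ∫ t, (if θb (φ t) = α then (1:ℂ) else 0) ∂μ = 0 := by
    have hdct2 := MeasureTheory.tendsto_integral_of_dominated_convergence
      (μ := μ) (F := fun k t => ((1 - ρseq k : ℝ):ℂ) * (1 - ((ρseq k:ℝ):ℂ) * (starRingEnd ℂ) α * θb (φ t))⁻¹)
      (f := fun t => if θb (φ t) = α then (1:ℂ) else 0)
      (bound := fun _ => 1)
      (fun k => by
        have hψa : AEMeasurable (fun t => θb (φ t)) μ := hψ.aemeasurable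
        exact (((aemeasurable_const.sub (aemeasurable_const.mul hψa)).inv).const_mul _).aestronglyMeasurable)
      (MeasureTheory.integrable_const _)
      (fun k => by
        filter_upwards [hμt] with t ht
        have hd := (hden (ρseq k) (hρpos k) (hρlt k) _ (le_of_eq ht.2)).1
        rw [norm_mul, norm_inv, Complex.norm_real, Real.norm_eq_abs,
          abs_of_pos (by have := hρlt k; linarith : (0:ℝ) < 1 - ρseq k)]
        calc (1-ρseq k) * ‖1 - ((ρseq k:ℝ):ℂ) * (starRingEnd ℂ) α * θb (φ t)‖⁻¹
            ≤ (1-ρseq k) * (1-ρseq k)⁻¹ := by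
              apply mul_le_mul_of_nonneg_left _ (by have := hρlt k; linarith)
              exact inv_anti₀ (by have := hρlt k; linarith) hd
          _ = 1 := mul_inv_cancel₀ (by have := hρlt k; linarith))
      (by
        filter_upwards [hμt] with t ht
        by_cases hcase : θb (φ t) = α
        · simp only [hcase, if_pos]
          have heq : ∀ k : ℕ, ((1 - ρseq k : ℝ):ℂ) * (1 - ((ρseq k:ℝ):ℂ) * (starRingEnd ℂ) α * α)⁻¹ = 1 := by
            intro k
            rw [mul_assoc, hαconj, mul_one]
            push_cast
            apply mul_inv_cancel₀
            intro hzero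
            have : (1:ℂ) - ρseq k = 0 := by exact_mod_cast hzero
            have : (ρseq k : ℝ) = 1 := by
              have := sub_eq_zero.mp this
              exact_mod_cast this.symm
            linarith [hρlt k]
          exact tendsto_const_nhds.congr fun k => (heq k).symm
        · simp only [hcase, if_neg, if_false]
          have hρc : Tendsto (fun k => ((ρseq k : ℝ):ℂ)) atTop (𝓝 1) := by
            have : Tendsto ρseq atTop (𝓝 1) := hρtend.mono_right nhdsWithin_le_nhds
            exact (Complex.continuous_ofReal.tendsto 1).comp this
          have hnum : Tendsto (fun k => ((1 - ρseq k : ℝ):ℂ)) atTop (𝓝 0) := by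
            have : Tendsto (fun k => 1 - ((ρseq k : ℝ):ℂ)) atTop (𝓝 (1-1)) :=
              tendsto_const_nhds.sub hρc
            simpa using this.congr fun k => by push_cast; ring
          have hdenlim : Tendsto (fun k => 1 - ((ρseq k:ℝ):ℂ) * (starRingEnd ℂ) α * θb (φ t))
              atTop (𝓝 (1 - 1 * (starRingEnd ℂ) α * θb (φ t))) :=
            tendsto_const_nhds.sub (((hρc.mul tendsto_const_nhds)).mul tendsto_const_nhds)
          have hne : 1 - 1 * (starRingEnd ℂ) α * θb (φ t) ≠ 0 := by
            rw [one_mul]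
            intro hzero
            have h1 : (starRingEnd ℂ) α * θb (φ t) = 1 := by
              have := sub_eq_zero.mp hzero
              exact this.symm
            apply hcase
            have := congrArg (fun w => α * w) h1
            simp only [mul_one] at this
            rw [← mul_assoc] at this
            rw [show α * (starRingEnd ℂ) α = 1 by rw [mul_comm]; exact hαconj] at this
            rw [one_mul] at this
            exact this
          have := hnum.mul (hdenlim.inv₀ hne)
          simpa using this)
    have hlhs : Tendsto (fun k => ∫ t, ((1 - ρseq k : ℝ):ℂ) * (1 - ((ρseq k:ℝ):ℂ) * (starRingEnd ℂ) α * θb (φ t))⁻¹ ∂μ)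
        atTop (𝓝 0) := by
      have heq : ∀ k, ∫ t, ((1 - ρseq k : ℝ):ℂ) * (1 - ((ρseq k:ℝ):ℂ) * (starRingEnd ℂ) α * θb (φ t))⁻¹ ∂μ
          = (2*Real.pi : ℝ) • (((1 - ρseq k : ℝ):ℂ) * (1 - ((ρseq k:ℝ):ℂ) * (starRingEnd ℂ) α * θ 0)⁻¹) :=
        fun k => hkey (ρseq k) (hρpos k) (hρlt k)
      rw [tendsto_congr heq]
      have hρc : Tendsto (fun k => ((ρseq k : ℝ):ℂ)) atTop (𝓝 1) := by
        have : Tendsto ρseq atTop (𝓝 1) := hρtend.mono_right nhdsWithin_le_nhds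
        exact (Complex.continuous_ofReal.tendsto 1).comp this
      have hnum : Tendsto (fun k => ((1 - ρseq k : ℝ):ℂ)) atTop (𝓝 0) := by
        have : Tendsto (fun k => 1 - ((ρseq k : ℝ):ℂ)) atTop (𝓝 (1-1)) :=
          tendsto_const_nhds.sub hρc
        simpa using this.congr fun k => by push_cast; ring
      have hθ0norm : ‖θ 0‖ < 1 := by simpa [mem_ball, dist_zero_right] using hθ0
      have hne : 1 - 1 * (starRingEnd ℂ) α * θ 0 ≠ 0 := by
        rw [one_mul]
        intro hzero
        have h1 : (starRingEnd ℂ) α * θ 0 = 1 := (sub_eq_zero.mp hzero).symm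
        have : ‖(starRingEnd ℂ) α * θ 0‖ = 1 := by rw [h1, norm_one]
        rw [norm_mul, RCLike.norm_conj, hα, one_mul] at this
        linarith
      have hdenlim : Tendsto (fun k => 1 - ((ρseq k:ℝ):ℂ) * (starRingEnd ℂ) α * θ 0)
          atTop (𝓝 (1 - 1 * (starRingEnd ℂ) α * θ 0)) :=
        tendsto_const_nhds.sub (((hρc.mul tendsto_const_nhds)).mul tendsto_const_nhds)
      have := (hnum.mul (hdenlim.inv₀ hne)).const_smul (2*Real.pi : ℝ)
      simpa using this
    exact tendsto_nhds_unique hdct2 hlhs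
  -- conclude that θb ≠ α almost everywhere
  haveI hμfin : IsFiniteMeasure μ := by
    constructor
    rw [hμuniv]
    exact ENNReal.ofReal_lt_top
  have hane_t : ∀ᵐ t ∂μ, θb (φ t) ≠ α := by
    set ψ' := hψ.mk _ with hψ'def
    have hψ'sm : StronglyMeasurable ψ' := hψ.stronglyMeasurable_mk
    have hψ'ae : (fun t => θb (φ t)) =ᵐ[μ] ψ' := hψ.ae_eq_mk
    have hLcong : ∫ t, (if θb (φ t) = α then (1:ℂ) else 0) ∂μ
        = ∫ t, (if ψ' t = α then (1:ℂ) else 0) ∂μ := by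
      apply integral_congr_ae
      filter_upwards [hψ'ae] with t ht
      rw [ht]
    have hSmeas : MeasurableSet (ψ' ⁻¹' {α}) :=
      hψ'sm.measurable (measurableSet_singleton α)
    have hind : ∫ t, (if ψ' t = α then (1:ℂ) else 0) ∂μ
        = (μ (ψ' ⁻¹' {α})).toReal • (1:ℂ) := by
      rw [← Measure.real_def, ← integral_indicator_const (1:ℂ) hSmeas]
      apply integral_congr_ae
      apply Eventually.of_forall
      intro t
      by_cases hcase : ψ' t = α
      · simp [Set.indicator_of_mem, hcase, mem_preimage]
      · simp [Set.indicator_of_notMem, hcase, mem_preimage]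
    rw [hLcong, hind] at hL
    have htoReal : (μ (ψ' ⁻¹' {α})).toReal = 0 := by
      have := hL
      rw [Complex.real_smul, mul_one] at this
      exact_mod_cast this
    have hnull : μ (ψ' ⁻¹' {α}) = 0 :=
      (ENNReal.toReal_eq_zero_iff _).mp htoReal |>.resolve_right (measure_ne_top μ _)
    have : ∀ᵐ t ∂μ, ψ' t ≠ α := by
      rw [ae_iff]
      simp only [ne_eq, not_not]; exact hnull
    filter_upwards [this, hψ'ae] with t h1 h2
    rw [h2]
    exact h1
  have hane : ∀ᵐ ζ ∂m, θb ζ ≠ α := by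
    set θb' := hθbm.mk _ with hθb'def
    have hθb'sm : StronglyMeasurable θb' := hθbm.stronglyMeasurable_mk
    have hθb'ae : θb =ᵐ[m] θb' := hθbm.ae_eq_mk
    have h1 : ∀ᵐ t ∂μ, θb (φ t) = θb' (φ t) := htrans hθb'ae
    have h2 : ∀ᵐ t ∂μ, θb' (φ t) ≠ α := by
      filter_upwards [h1, hane_t] with t ht1 ht2
      rw [← ht1]
      exact ht2
    have hnullt : μ (φ ⁻¹' (θb' ⁻¹' {α})) = 0 := by
      rw [ae_iff] at h2
      simpa [not_not, preimage] using h2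
    have hNmeas : MeasurableSet (θb' ⁻¹' {α}) := hθb'sm.measurable (measurableSet_singleton α)
    have hmN : m (θb' ⁻¹' {α}) = 0 := by
      rw [hmap _ hNmeas, hnullt, mul_zero]
    have : ∀ᵐ ζ ∂m, θb' ζ ≠ α := by
      rw [ae_iff]
      simpa [not_not, preimage] using hmN
    filter_upwards [this, hθb'ae] with ζ h1' h2'
    rw [h2']
    exact h1'

  -- Part B: lower bound for the Poisson kernel and the Besicovitch differentiation argument
  have hsigma_bound : ∀ ζ ∈ sphere (0:ℂ) 1, ∀ r : ℝ, 0 < r → r < 1 →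
      (σ (closedBall ζ r)).toReal * (1/(4*r)) ≤
        (1 - ‖θ (((1-r:ℝ):ℂ) * ζ)‖^2) / ‖α - θ (((1-r:ℝ):ℂ) * ζ)‖^2 := by
    intro ζ hζ r hr0 hr1
    set z : ℂ := ((1-r:ℝ):ℂ) * ζ with hz
    have hζn : ‖ζ‖ = 1 := by simpa [mem_sphere_iff_norm] using hζ
    have hzn : ‖z‖ = 1 - r := by
      rw [hz, norm_mul, Complex.norm_real, hζn, mul_one, Real.norm_eq_abs,
        abs_of_pos (by linarith : (0:ℝ) < 1 - r)]
    have hzball : z ∈ ball (0:ℂ) 1 := by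
      simp only [mem_ball, dist_zero_right, hzn]
      linarith
    have hint_eq := hσ z hzball
    have hPnonneg : ∀ ξ : ℂ, 0 ≤ (1 - ‖z‖^2)/‖ξ - z‖^2 := by
      intro ξ
      apply div_nonneg
      · nlinarith [hzn]
      · positivity
    have hθz : ‖θ z‖ < 1 := by simpa [mem_ball, dist_zero_right] using hθmap z hzball
    have hRHSpos : 0 < (1 - ‖θ z‖^2)/‖α - θ z‖^2 := by
      apply div_pos
      · nlinarith [norm_nonneg (θ z)]
      · have hne : α ≠ θ z := by
          intro h
          rw [← h, hα] at hθz
          linarith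
        have : 0 < ‖α - θ z‖ := by rw [norm_pos_iff, sub_ne_zero]; exact hne
        positivity
    have hInt : Integrable (fun ξ => (1 - ‖z‖^2)/‖ξ - z‖^2) σ := by
      by_contra hni
      rw [MeasureTheory.integral_undef hni] at hint_eq
      rw [← hint_eq] at hRHSpos
      exact lt_irrefl 0 hRHSpos
    set A : Set ℂ := closedBall ζ r ∩ sphere (0:ℂ) 1 with hA
    have hAmeas : MeasurableSet A := measurableSet_closedBall.inter isClosed_sphere.measurableSet
    have hlb : ∀ ξ ∈ A, 1/(4*r) ≤ (1 - ‖z‖^2)/‖ξ - z‖^2 := by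
      intro ξ hξ
      obtain ⟨hξ1, hξ2⟩ := hξ
      have hξn : ‖ξ‖ = 1 := by simpa [mem_sphere_iff_norm] using hξ2
      have h1 : ‖ξ - ζ‖ ≤ r := by simpa [mem_closedBall, dist_eq_norm] using hξ1
      have h2 : ‖ζ - z‖ = r := by
        have hrew : ζ - ((1-r:ℝ):ℂ) * ζ = ((r:ℝ):ℂ) * ζ := by push_cast; ring
        rw [hz, hrew, norm_mul, Complex.norm_real, hζn, mul_one, Real.norm_eq_abs,
          abs_of_pos hr0]
      have hd1 : ‖ξ - z‖ ≤ 2*r := by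
        have hsplit : ξ - z = (ξ - ζ) + (ζ - z) := by ring
        calc ‖ξ - z‖ = ‖(ξ - ζ) + (ζ - z)‖ := by rw [hsplit]
          _ ≤ ‖ξ - ζ‖ + ‖ζ - z‖ := norm_add_le _ _
          _ ≤ r + r := by rw [h2]; linarith
          _ = 2*r := by ring
      have hnum : r ≤ 1 - ‖z‖^2 := by nlinarith [hzn]
      have hdenpos : 0 < ‖ξ - z‖ := by
        rw [norm_pos_iff, sub_ne_zero]
        intro h
        rw [← h, hξn] at hzn
        linarith
      have hden4 : ‖ξ - z‖^2 ≤ 4*r^2 := by nlinarith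
      have heq1 : 1/(4*r) = r/(4*r^2) := by field_simp
      rw [heq1]
      exact div_le_div₀ (by nlinarith [hzn]) hnum (by positivity) hden4
    have hAineq := MeasureTheory.setIntegral_ge_of_const_le hAmeas (measure_ne_top σ A) hlb
      (hInt.integrableOn)
    have hsub : ∫ ξ in A, (1 - ‖z‖^2)/‖ξ - z‖^2 ∂σ ≤ ∫ ξ, (1 - ‖z‖^2)/‖ξ - z‖^2 ∂σ :=
      setIntegral_le_integral hInt (Eventually.of_forall hPnonneg)
    have hσA : σ (closedBall ζ r) ≤ σ A := by
      have hcover : closedBall ζ r ⊆ A ∪ (sphere (0:ℂ) 1)ᶜ := by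
        intro x hx
        by_cases hxs : x ∈ sphere (0:ℂ) 1
        · exact Or.inl ⟨hx, hxs⟩
        · exact Or.inr hxs
      calc σ (closedBall ζ r) ≤ σ (A ∪ (sphere (0:ℂ) 1)ᶜ) := measure_mono hcover
        _ ≤ σ A + σ (sphere (0:ℂ) 1)ᶜ := measure_union_le _ _
        _ = σ A := by rw [hσsupp, add_zero]
    have htR : (σ (closedBall ζ r)).toReal ≤ (σ A).toReal :=
      ENNReal.toReal_mono (measure_ne_top σ A) hσA
    calc (σ (closedBall ζ r)).toReal * (1/(4*r))
        ≤ (σ A).toReal * (1/(4*r)) := by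
          apply mul_le_mul_of_nonneg_right htR
          positivity
      _ ≤ ∫ ξ in A, (1 - ‖z‖^2)/‖ξ - z‖^2 ∂σ := by
          have : (σ A).toReal * (1/(4*r)) ≤ _ := hAineq
          linarith [hAineq]
      _ ≤ ∫ ξ, (1 - ‖z‖^2)/‖ξ - z‖^2 ∂σ := hsub
      _ = (1 - ‖θ z‖^2)/‖α - θ z‖^2 := hint_eq
  -- lower bound for m of small balls centered on the circle
  have hm_lower : ∀ s0 : ℝ, s0 ∈ Ioc 0 (2*Real.pi) → ∀ r : ℝ, 0 < r → r ≤ 1 →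
      ENNReal.ofReal (r/(4*Real.pi)) ≤ m (closedBall (φ s0) r) := by
    intro s0 hs0 r hr0 hr1
    have hmapcb := hmap (closedBall (φ s0) r) measurableSet_closedBall
    have hπ3 : (3:ℝ) < Real.pi := Real.pi_gt_three
    set J : Set ℝ := if s0 ≤ Real.pi then Icc s0 (s0 + r/2) else Icc (s0 - r/2) s0 with hJ
    have hJsub1 : J ⊆ Ioc 0 (2*Real.pi) := by
      rw [hJ]
      split_ifs with hcase
      · intro t ht
        obtain ⟨h1, h2⟩ := ht
        exact ⟨by linarith [hs0.1], by linarith⟩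
      · push_neg at hcase
        intro t ht
        obtain ⟨h1, h2⟩ := ht
        exact ⟨by linarith, by linarith [hs0.2]⟩
    have hJsub2 : J ⊆ φ ⁻¹' (closedBall (φ s0) r) := by
      intro t ht
      have habs : |t - s0| ≤ r/2 := by
        rw [hJ] at ht
        split_ifs at ht with hcase <;>
          (obtain ⟨h1, h2⟩ := ht; rw [abs_le]; constructor <;> linarith)
      simp only [mem_preimage, mem_closedBall, dist_eq_norm]
      have hfactor : φ t - φ s0 = φ s0 * (Complex.exp (((t - s0:ℝ):ℂ) * I) - 1) := by
        show Complex.exp ((t:ℝ) * I) - Complex.exp ((s0:ℝ) * I)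
            = Complex.exp ((s0:ℝ) * I) * (Complex.exp (((t - s0:ℝ):ℂ) * I) - 1)
        rw [mul_sub, mul_one, ← Complex.exp_add]
        push_cast
        ring_nf
      rw [hfactor, norm_mul]
      have h1 : ‖φ s0‖ = 1 := Complex.norm_exp_ofReal_mul_I s0
      rw [h1, one_mul]
      have habs2 : ‖((t - s0:ℝ):ℂ) * I‖ = |t - s0| := by
        rw [norm_mul, Complex.norm_I, mul_one, Complex.norm_real, Real.norm_eq_abs]
      have hle1 : ‖((t - s0:ℝ):ℂ) * I‖ ≤ 1 := by
        rw [habs2]; linarith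
      have := Complex.norm_exp_sub_one_le hle1
      rw [habs2] at this
      calc ‖Complex.exp (((t - s0:ℝ):ℂ) * I) - 1‖ = ‖Complex.exp (((t - s0:ℝ):ℂ) * I) - 1‖ := rfl
        _ ≤ 2 * |t - s0| := this
        _ ≤ r := by linarith
    have hJm : MeasurableSet J := by
      rw [hJ]; split_ifs <;> exact measurableSet_Icc
    have hvolJ : ENNReal.ofReal (r/2) ≤ μ J := by
      have : μ J = volume (J ∩ Ioc 0 (2*Real.pi)) := by
        rw [hμ, Measure.restrict_apply hJm]
      rw [this, inter_eq_left.mpr hJsub1]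
      rw [hJ]
      split_ifs
      · rw [Real.volume_Icc, show s0 + r/2 - s0 = r/2 by ring]
      · rw [Real.volume_Icc, show s0 - (s0 - r/2) = r/2 by ring]
    have hcmul : c * ENNReal.ofReal (r/2) = ENNReal.ofReal (r/(4*Real.pi)) := by
      rw [hc]
      rw [show r/(4*Real.pi) = (r/2)/(2*Real.pi) by rw [div_div, show (2:ℝ)*(2*Real.pi) = 4*Real.pi by ring]]
      rw [ENNReal.ofReal_div_of_pos twopi_pos, ENNReal.div_eq_inv_mul]
    calc ENNReal.ofReal (r/(4*Real.pi)) = c * ENNReal.ofReal (r/2) := hcmul.symm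
      _ ≤ c * μ J := mul_le_mul_right hvolJ c
      _ ≤ c * μ (φ ⁻¹' (closedBall (φ s0) r)) := mul_le_mul_right (measure_mono hJsub2) c
      _ = m (closedBall (φ s0) r) := hmapcb.symm
  -- conclude singularity via the Besicovitch differentiation theorem
  refine (MeasureTheory.Measure.rnDeriv_eq_zero σ m).mp ?_
  have hbes := Besicovitch.ae_tendsto_rnDeriv σ m
  have hrn_tendsto : Tendsto (fun n : ℕ => 1 - ρseq n) atTop (𝓝[>] (0:ℝ)) := by
    rw [tendsto_nhdsWithin_iff]
    constructor
    · have : Tendsto ρseq atTop (𝓝 1) := hρtend.mono_right nhdsWithin_le_nhds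
      have h2 := this.const_sub 1
      simpa using h2
    · exact Eventually.of_forall fun n => by
        have := hρlt n
        simp only [mem_Ioi]
        linarith
  filter_upwards [hbes, hinner, hane, haes] with ζ hζbes hζinner hζne hζsph
  -- find the angle parametrizing ζ
  have hζn : ‖ζ‖ = 1 := by simpa [mem_sphere_iff_norm] using hζsph
  obtain ⟨s0, hs0mem, hφs0⟩ : ∃ s0 ∈ Ioc 0 (2*Real.pi), φ s0 = ζ := by
    have hζ0 : ζ ≠ 0 := by
      intro h
      rw [h, norm_zero] at hζn
      exact one_ne_zero hζn.symm
    have hexp : Complex.exp ((Complex.arg ζ : ℝ) * I) = ζ := by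
      have := Complex.norm_mul_exp_arg_mul_I ζ
      have habs : ‖ζ‖ = 1 := hζn
      rw [habs] at this
      simpa using this
    have harg := Complex.arg_mem_Ioc ζ
    by_cases hcase : 0 < Complex.arg ζ
    · exact ⟨Complex.arg ζ, ⟨hcase, le_trans harg.2 (by linarith [Real.pi_pos])⟩, hexp⟩
    · push_neg at hcase
      refine ⟨Complex.arg ζ + 2*Real.pi, ⟨by linarith [harg.1, Real.pi_pos], by linarith⟩, ?_⟩
      show Complex.exp (((Complex.arg ζ + 2*Real.pi : ℝ):ℂ) * I) = ζ
      push_cast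
      rw [add_mul, Complex.exp_add, Complex.exp_two_pi_mul_I, mul_one]
      exact hexp
    -- end obtain
  set rn : ℕ → ℝ := fun n => 1 - ρseq n with hrn
  have hrn0 : ∀ n, 0 < rn n := fun n => by
    have := hρlt n; simp only [hrn]; linarith
  have hrn1 : ∀ n, rn n < 1 := fun n => by
    have := hρpos n; simp only [hrn]; linarith
  have hcomp : Tendsto (fun n => σ (closedBall ζ (rn n)) / m (closedBall ζ (rn n)))
      atTop (𝓝 (σ.rnDeriv m ζ)) := hζbes.comp hrn_tendsto
  -- boundary value of the Poisson quotient tends to zero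
  set u : ℕ → ℝ := fun n => (1 - ‖θ (((1 - rn n:ℝ):ℂ) * ζ)‖^2) / ‖α - θ (((1 - rn n:ℝ):ℂ) * ζ)‖^2
    with hu
  have hθn : Tendsto (fun n => θ (((1 - rn n:ℝ):ℂ) * ζ)) atTop (𝓝 (θb ζ)) := by
    have : (fun n => θ (((1 - rn n:ℝ):ℂ) * ζ)) = fun n => θ (((ρseq n:ℝ):ℂ) * ζ) := by
      funext n
      congr 2
      simp only [hrn]
      push_cast
      ring
    rw [this]
    exact hζinner.1.comp hρtend
  have hune : ‖α - θb ζ‖^2 ≠ 0 := by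
    have h0 : α - θb ζ ≠ 0 := sub_ne_zero.mpr (Ne.symm hζne)
    exact pow_ne_zero 2 (norm_ne_zero_iff.mpr h0)
  have hulim : Tendsto u atTop (𝓝 0) := by
    have hnum : Tendsto (fun n => 1 - ‖θ (((1 - rn n:ℝ):ℂ) * ζ)‖^2) atTop
        (𝓝 (1 - ‖θb ζ‖^2)) := tendsto_const_nhds.sub ((hθn.norm).pow 2)
    have hden : Tendsto (fun n => ‖α - θ (((1 - rn n:ℝ):ℂ) * ζ)‖^2) atTop
        (𝓝 (‖α - θb ζ‖^2)) := ((tendsto_const_nhds.sub hθn).norm).pow 2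
    have h2 : Tendsto (fun n => (1 - ‖θ (((1 - rn n:ℝ):ℂ) * ζ)‖^2) / ‖α - θ (((1 - rn n:ℝ):ℂ) * ζ)‖^2)
        atTop (𝓝 ((1 - ‖θb ζ‖^2) / ‖α - θb ζ‖^2)) := hnum.div hden hune
    rw [hζinner.2] at h2
    rw [hu]
    simpa using h2
  have hunonneg : ∀ n, 0 ≤ u n := by
    intro n
    have hball : (((1 - rn n:ℝ):ℂ) * ζ) ∈ ball (0:ℂ) 1 := by
      simp only [mem_ball, dist_zero_right, norm_mul, Complex.norm_real, hζn, mul_one,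
        Real.norm_eq_abs]
      rw [abs_of_pos (by have := hrn1 n; linarith : (0:ℝ) < 1 - rn n)]
      have := hrn0 n
      linarith
    have hθb : ‖θ (((1 - rn n:ℝ):ℂ) * ζ)‖ < 1 := by
      simpa [mem_ball, dist_zero_right] using hθmap _ hball
    apply div_nonneg
    · nlinarith [norm_nonneg (θ (((1 - rn n:ℝ):ℂ) * ζ))]
    · positivity
  -- the upper bound for the ratios
  have hle : ∀ n, σ (closedBall ζ (rn n)) / m (closedBall ζ (rn n))
      ≤ ENNReal.ofReal (16*Real.pi * u n) := by
    intro n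
    have hb1 := hsigma_bound ζ hζsph (rn n) (hrn0 n) (hrn1 n)
    have hb2 : ENNReal.ofReal ((rn n)/(4*Real.pi)) ≤ m (closedBall ζ (rn n)) := by
      rw [← hφs0]
      exact hm_lower s0 hs0mem (rn n) (hrn0 n) (le_of_lt (hrn1 n))
    have hσle : σ (closedBall ζ (rn n)) ≤ ENNReal.ofReal (u n * (4 * rn n)) := by
      rw [ENNReal.le_ofReal_iff_toReal_le (measure_ne_top σ _)
        (by have := hunonneg n; have := hrn0 n; positivity)]
      have h4r : (0:ℝ) < 4 * rn n := by have := hrn0 n; linarith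
      have := hb1
      rw [mul_one_div, div_le_iff₀ h4r] at this
      calc (σ (closedBall ζ (rn n))).toReal
          ≤ ((1 - ‖θ (((1 - rn n:ℝ):ℂ) * ζ)‖^2) / ‖α - θ (((1 - rn n:ℝ):ℂ) * ζ)‖^2) * (4 * rn n) := this
        _ = u n * (4 * rn n) := by rw [hu]
    have hdiv : σ (closedBall ζ (rn n)) / m (closedBall ζ (rn n))
        ≤ ENNReal.ofReal (u n * (4 * rn n)) / ENNReal.ofReal ((rn n)/(4*Real.pi)) :=
      ENNReal.div_le_div hσle hb2
    have heq : ENNReal.ofReal (u n * (4 * rn n)) / ENNReal.ofReal ((rn n)/(4*Real.pi))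
        = ENNReal.ofReal (16*Real.pi * u n) := by
      rw [← ENNReal.ofReal_div_of_pos (by have := hrn0 n; positivity)]
      congr 1
      have hrne : rn n ≠ 0 := (hrn0 n).ne'
      field_simp
      ring
    rw [heq] at hdiv
    exact hdiv
  have hbound0 : Tendsto (fun n => ENNReal.ofReal (16*Real.pi * u n)) atTop (𝓝 0) := by
    have : Tendsto (fun n => 16*Real.pi * u n) atTop (𝓝 (16*Real.pi * 0)) :=
      hulim.const_mul _
    rw [mul_zero] at this
    have h2 := (ENNReal.continuous_ofReal.tendsto 0).comp this
    rw [ENNReal.ofReal_zero] at h2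
    exact h2
  have hzero : Tendsto (fun n => σ (closedBall ζ (rn n)) / m (closedBall ζ (rn n)))
      atTop (𝓝 0) := by
    apply tendsto_of_tendsto_of_tendsto_of_le_of_le tendsto_const_nhds hbound0
    · exact fun n => by simp
    · exact hle
  have := tendsto_nhds_unique hcomp hzero
  simpa using this
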